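/- Let G be the symmetric bilinear form on V ⊕ V given by G((X₁,X₂),(Y₁,Y₂)) = a₂(g(X₁,Y₂)+g(X₂,Y₁)) + a₁·g(X₂,Y₂), with a₂ ≠ 0, a₁ > 0. For η ∈ V set S = (a₁/(√a₁·a₂))(η,0) − (1/√a₁)(0,η) and T = (1/√a₁)(0,η). Then G(S,S') = −g(η,η'), G(S,T') = 0, and G(T,T') = g(η,η'). -/

import Mathlib

open RealInnerProductSpace

/-- Case 4 of the orthonormal normal frame construction: `A = 0`, `a₂ ≠ 0`,
`a₁ > 0`. -/
theorem normal_frame_case4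
    {V : Type*} [NormedAddCommGroup V] [InnerProductSpace ℝ V]
    (a₁ a₂ : ℝ) (ha₂ : a₂ ≠ 0) (ha₁ : 0 < a₁)
    (G : V × V → V × V → ℝ)
    (hG : ∀ X Y : V × V, G X Y = a₂ * (⟪X.1, Y.2⟫ + ⟪X.2, Y.1⟫) + a₁ * ⟪X.2, Y.2⟫)
    (η η' : V)
    (S S' T T' : V × V)
    (hS : S = (a₁ / (Real.sqrt a₁ * a₂)) • ((η, 0) : V × V)
            - (1 / Real.sqrt a₁) • ((0, η) : V × V))
    (hS' : S' = (a₁ / (Real.sqrt a₁ * a₂)) • ((η', 0) : V × V)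
            - (1 / Real.sqrt a₁) • ((0, η') : V × V))
    (hT : T = (1 / Real.sqrt a₁) • ((0, η) : V × V))
    (hT' : T' = (1 / Real.sqrt a₁) • ((0, η') : V × V)) :
    G S S' = -⟪η, η'⟫ ∧ G S T' = 0 ∧ G T T' = ⟪η, η'⟫ := by
  have hs : Real.sqrt a₁ * Real.sqrt a₁ = a₁ := Real.mul_self_sqrt ha₁.le
  have hs0 : Real.sqrt a₁ ≠ 0 := by positivity
  have ha₁0 : a₁ ≠ 0 := ha₁.ne'
  subst hS hS' hT hT'
  have hs : Real.sqrt a₁ * Real.sqrt a₁ = a₁ := Real.mul_self_sqrt ha₁.le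
  have hs0 : Real.sqrt a₁ ≠ 0 := by positivity
  have ha₁0 : a₁ ≠ 0 := ha₁.ne'
  refine ⟨?_, ?_, ?_⟩ <;>
    simp only [hG, Prod.smul_mk, Prod.fst_sub, Prod.snd_sub, smul_zero,
      Prod.mk_sub_mk, sub_zero, zero_sub,
      real_inner_smul_left, real_inner_smul_right, inner_sub_left, inner_sub_right,
      inner_zero_left, inner_zero_right, inner_neg_left, inner_neg_right] <;>
    field_simp
  · linear_combination (⟪η, η'⟫) * hs
  · linear_combination
  · linear_combination (-⟪η, η'⟫) * hs
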